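/- Let x₁,x₂,x₃,x₄ ∈ ℤ³ be vertices of a tetrahedron whose only non-vertex lattice point is the origin, lying strictly in its interior. Let μᵢ = λᵢ/h be the barycentric coordinates of the origin (λᵢ ∈ ℕ coprime, h = Σλᵢ). Then for all κ ∈ {2,...,h-2}, Σᵢ {κλᵢ/h} = 2. -/

import Mathlib

/-- The real vector corresponding to a lattice point of `ℤ³`. -/
noncomputable def toR (x : Fin 3 → ℤ) : Fin 3 → ℝ := fun i => (x i : ℝ)

/-- A lattice tetrahedron in `ℤ³` is *Fano* if its vertices are affinely independent
lattice points, and the only lattice point it contains other than its vertices is the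
origin, which lies strictly in its interior. -/
def IsFanoTetra (x : Fin 4 → Fin 3 → ℤ) : Prop :=
  AffineIndependent ℝ (fun i => toR (x i)) ∧
  (0 : Fin 3 → ℝ) ∈ interior (convexHull ℝ (Set.range fun i => toR (x i))) ∧
  ∀ p : Fin 3 → ℤ, toR p ∈ convexHull ℝ (Set.range fun i => toR (x i)) →
    p = 0 ∨ ∃ i, p = x i

lemma gcd_step (h c : ℤ) (hc : 0 ≤ c) :
    ∀ a b : ℤ, h ∣ c * a → h ∣ c * b → h ∣ c * ((Int.gcd a b : ℕ) : ℤ) := by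
  intro a b ha hb
  have := Int.dvd_coe_gcd ha hb
  rwa [Int.gcd_mul_left, Nat.cast_mul, Int.natAbs_of_nonneg hc] at this

lemma dvd_of_dvd_mul_each (l : Fin 4 → ℤ)
    (hgcd : Int.gcd (Int.gcd (Int.gcd (l 0) (l 1)) (l 2)) (l 3) = 1)
    (h c : ℤ) (hc : 0 ≤ c) (hdvd : ∀ i, h ∣ c * l i) : h ∣ c := by
  have d1 := gcd_step h c hc (l 0) (l 1) (hdvd 0) (hdvd 1)
  have d2 := gcd_step h c hc _ (l 2) d1 (hdvd 2)
  have d3 := gcd_step h c hc _ (l 3) d2 (hdvd 3)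
  rwa [hgcd, Nat.cast_one, mul_one] at d3

lemma fano_sum_ne_one (x : Fin 4 → Fin 3 → ℤ) (hx : IsFanoTetra x)
    (l : Fin 4 → ℤ)
    (hgcd : Int.gcd (Int.gcd (Int.gcd (l 0) (l 1)) (l 2)) (l 3) = 1)
    (hbary : (∑ i, l i • x i) = 0)
    (h : ℤ) (hh : h = l 0 + l 1 + l 2 + l 3)
    (κ : ℤ) (hκ1 : 2 ≤ κ) (hκ2 : κ ≤ h - 2) :
    (∑ i, Int.fract (((κ * l i : ℤ) : ℚ) / (h : ℚ))) ≠ 1 := by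
  intro hsum
  have hhne : h ≠ 0 := by omega
  have hQ : (h : ℚ) ≠ 0 := Int.cast_ne_zero.mpr hhne
  have hR : (h : ℝ) ≠ 0 := Int.cast_ne_zero.mpr hhne
  set f : Fin 4 → ℚ := fun i => Int.fract (((κ * l i : ℤ) : ℚ) / (h : ℚ)) with hf
  set m : Fin 4 → ℤ := fun i => ⌊((κ * l i : ℤ) : ℚ) / (h : ℚ)⌋ with hm
  have hfm : ∀ i, f i = ((κ * l i : ℤ) : ℚ) / (h : ℚ) - m i := fun i => rfl
  set p : Fin 3 → ℤ := fun j => -∑ i, m i * x i j with hp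
  have hbZ : ∀ j, (∑ i, l i * x i j) = 0 := by
    intro j
    have := congrFun hbary j
    simpa using this
  have hbR : ∀ j, (∑ i, (l i : ℝ) * (x i j : ℝ)) = 0 := by
    intro j; exact_mod_cast hbZ j
  have key : ∀ j, (p j : ℝ) = ∑ i, ((f i : ℝ)) * (x i j : ℝ) := by
    intro j
    have e1 : ∀ i, ((f i : ℝ)) = (κ : ℝ) * (l i : ℝ) / (h : ℝ) - (m i : ℝ) := by
      intro i; rw [hfm i]; push_cast; ring
    simp only [e1, hp]
    have hb := hbR j
    simp only [Fin.sum_univ_four] at hb ⊢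
    push_cast
    linear_combination (-(κ : ℝ)/(h : ℝ)) * hb
  have hsumR : (∑ i, ((f i : ℝ))) = 1 := by
    have : ((∑ i, f i : ℚ) : ℝ) = 1 := by rw [hsum]; norm_num
    simpa [Rat.cast_sum] using this
  have hnn : ∀ i, (0 : ℝ) ≤ (f i : ℝ) := by
    intro i; exact_mod_cast Int.fract_nonneg _
  have hlt1 : ∀ i, ((f i : ℝ)) < 1 := by
    intro i; exact_mod_cast Int.fract_lt_one _
  have htoR : toR p = ∑ i, ((f i : ℝ)) • toR (x i) := by
    funext j
    rw [Finset.sum_apply]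
    simpa [toR] using key j
  have hmem : toR p ∈ convexHull ℝ (Set.range fun i => toR (x i)) := by
    have hc : toR p = Finset.univ.centerMass (fun i => ((f i : ℝ))) (fun i => toR (x i)) := by
      rw [Finset.centerMass_eq_of_sum_1 _ _ hsumR, htoR]
    rw [hc]
    exact Finset.centerMass_mem_convexHull _ (fun i _ => hnn i)
      (by rw [hsumR]; norm_num) (fun i _ => Set.mem_range_self i)
  rcases hx.2.2 p hmem with hp0 | ⟨i0, hpi⟩
  · -- p = 0 : then f i = l i / h, so h ∣ (κ-1) l i
    have hz : (∑ i, ((f i : ℝ) - (l i : ℝ) / (h : ℝ)) • toR (x i)) = 0 := by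
      rw [Finset.sum_congr rfl (fun i _ => sub_smul _ _ _), Finset.sum_sub_distrib, ← htoR]
      rw [hp0]
      have : (∑ i, ((l i : ℝ) / (h : ℝ)) • toR (x i)) = 0 := by
        funext j
        rw [Finset.sum_apply]
        have hb := hbR j
        simp only [toR, Pi.smul_apply, smul_eq_mul, Pi.zero_apply]
        field_simp
        simpa [div_eq_iff hR, Finset.sum_div] using congrArg (· / (h:ℝ)) hb
      rw [this, sub_zero]
      funext j
      simp [toR]
    have hw0 := affineIndependent_iff.mp hx.1 Finset.univ
      (fun i => (f i : ℝ) - (l i : ℝ) / (h : ℝ))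
      (by
        rw [Finset.sum_sub_distrib, hsumR]
        have : (∑ i, (l i : ℝ) / (h : ℝ)) = 1 := by
          rw [← Finset.sum_div, div_eq_one_iff_eq hR]
          push_cast [Fin.sum_univ_four]
          exact_mod_cast hh.symm
        rw [this]; ring) hz
    have heq : ∀ i, (f i : ℝ) = (l i : ℝ) / (h : ℝ) := by
      intro i
      have := hw0 i (Finset.mem_univ i)
      linarith
    have hdvd : ∀ i, h ∣ (κ - 1) * l i := by
      intro i
      have hq : f i = (l i : ℚ) / (h : ℚ) := by
        have := heq i
        have h2 : ((f i : ℝ)) = (((l i : ℚ) / (h : ℚ) : ℚ) : ℝ) := by push_cast; exact this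
        exact_mod_cast h2
      rw [hfm i] at hq
      have : (κ : ℚ) * l i - m i * h = l i := by
        field_simp at hq
        push_cast at hq ⊢
        linarith
      have hZ : κ * l i - m i * h = l i := by exact_mod_cast this
      exact ⟨m i, by linarith⟩
    have := dvd_of_dvd_mul_each l hgcd h (κ - 1) (by omega) hdvd
    have := Int.le_of_dvd (by omega) this
    omega
  · -- p = x i0 : then f i0 = 1, contradiction
    have hz : (∑ i, ((f i : ℝ) - (if i = i0 then 1 else 0)) • toR (x i)) = 0 := by
      rw [Finset.sum_congr rfl (fun i _ => sub_smul _ _ _), Finset.sum_sub_distrib, ← htoR]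
      rw [hpi]
      simp [ite_smul]
    have hw0 := affineIndependent_iff.mp hx.1 Finset.univ
      (fun i => (f i : ℝ) - (if i = i0 then 1 else 0))
      (by
        rw [Finset.sum_sub_distrib, hsumR]
        simp) hz
    have := hw0 i0 (Finset.mem_univ i0)
    simp at this
    have := hlt1 i0
    linarith

theorem fanoTetra_fract_sum_eq_two
    (x : Fin 4 → Fin 3 → ℤ) (hx : IsFanoTetra x)
    (l : Fin 4 → ℤ) (hpos : ∀ i, 0 < l i)
    (hgcd : Int.gcd (Int.gcd (Int.gcd (l 0) (l 1)) (l 2)) (l 3) = 1)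
    (hbary : (∑ i, l i • x i) = 0)
    (h : ℤ) (hh : h = l 0 + l 1 + l 2 + l 3) :
    ∀ κ : ℤ, 2 ≤ κ → κ ≤ h - 2 →
      (∑ i, Int.fract (((κ * l i : ℤ) : ℚ) / (h : ℚ))) = 2 := by
  intro κ hκ1 hκ2
  have hhne : h ≠ 0 := by omega
  have hQ : (h : ℚ) ≠ 0 := Int.cast_ne_zero.mpr hhne
  set f : Fin 4 → ℚ := fun i => Int.fract (((κ * l i : ℤ) : ℚ) / (h : ℚ)) with hf
  set m : Fin 4 → ℤ := fun i => ⌊((κ * l i : ℤ) : ℚ) / (h : ℚ)⌋ with hm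
  have hfm : ∀ i, f i = ((κ * l i : ℤ) : ℚ) / (h : ℚ) - m i := fun i => rfl
  have hl : ((l 0 : ℚ) + l 1 + l 2 + l 3) = (h : ℚ) := by exact_mod_cast hh.symm
  have hsf : (∑ i, f i) = ((κ - (m 0 + m 1 + m 2 + m 3) : ℤ) : ℚ) := by
    simp only [Fin.sum_univ_four, hfm]
    push_cast
    field_simp
    linear_combination (κ : ℚ) * hl
  have hnn : ∀ i, (0 : ℚ) ≤ f i := fun i => Int.fract_nonneg _
  have hlt1 : ∀ i, f i < 1 := fun i => Int.fract_lt_one _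
  -- sum is an integer n with 0 ≤ n < 4
  set n : ℤ := κ - (m 0 + m 1 + m 2 + m 3) with hn
  have hn0 : (0 : ℚ) ≤ (n : ℚ) := by
    rw [← hsf]
    exact Finset.sum_nonneg fun i _ => hnn i
  have hn4 : ((n : ℚ)) < 4 := by
    rw [← hsf, Fin.sum_univ_four]
    have := hlt1 0; have := hlt1 1; have := hlt1 2; have := hlt1 3
    linarith
  have hnlo : 0 ≤ n := by exact_mod_cast hn0
  have hnhi : n < 4 := by exact_mod_cast hn4
  -- n ≠ 0
  have hne0 : n ≠ 0 := by
    intro h0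
    have hs0 : (∑ i, f i) = 0 := by rw [hsf, h0]; norm_num
    have hall : ∀ i, f i = 0 := by
      intro i
      have := Finset.sum_eq_zero_iff_of_nonneg (fun i _ => hnn i) |>.mp hs0
      exact this i (Finset.mem_univ i)
    have hdvd : ∀ i, h ∣ κ * l i := by
      intro i
      have := hall i
      rw [hfm i, sub_eq_zero] at this
      have : (κ : ℚ) * l i = m i * h := by
        field_simp at this
        push_cast at this ⊢
        linarith
      have hZ : κ * l i = m i * h := by exact_mod_cast this
      exact ⟨m i, by linarith⟩
    have := dvd_of_dvd_mul_each l hgcd h κ (by omega) hdvd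
    have := Int.le_of_dvd (by omega) this
    omega
  -- n ≠ 1
  have hne1 : n ≠ 1 := by
    intro h1
    refine fano_sum_ne_one x hx l hgcd hbary h hh κ hκ1 hκ2 ?_
    rw [hsf, h1]; norm_num
  -- n ≠ 3
  have hne3 : n ≠ 3 := by
    intro h3
    have hs3 : (∑ i, f i) = 3 := by rw [hsf, h3]; norm_num
    have hfpos : ∀ i, 0 < f i := by
      intro i
      rw [Fin.sum_univ_four] at hs3
      have h0 := hnn 0; have h1 := hnn 1; have h2 := hnn 2; have h3' := hnn 3
      have k0 := hlt1 0; have k1 := hlt1 1; have k2 := hlt1 2; have k3 := hlt1 3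
      fin_cases i <;> simp <;> linarith
    have hcompl : ∀ i, Int.fract ((((h - κ) * l i : ℤ) : ℚ) / (h : ℚ)) = 1 - f i := by
      intro i
      have e : (((h - κ) * l i : ℤ) : ℚ) / (h : ℚ) = (l i : ℤ) + (-(((κ * l i : ℤ) : ℚ) / (h : ℚ))) := by
        push_cast
        field_simp
        ring
      rw [e, Int.fract_intCast_add, Int.fract_neg (ne_of_gt (hfpos i))]
    have : (∑ i, Int.fract ((((h - κ) * l i : ℤ) : ℚ) / (h : ℚ))) = 1 := by
      simp only [hcompl, Fin.sum_univ_four] at *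
      linarith
    exact fano_sum_ne_one x hx l hgcd hbary h hh (h - κ) (by omega) (by omega) this
  have : n = 2 := by omega
  rw [hsf, this]; norm_num
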